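/- Let G = Z/nZ be a finite cyclic group with generator g and A = k[G] its group algebra. For each m with 1 ≤ m ≤ n, the linear map Δ_m determined by Δ_m(1) = Σ_{k=1}^{n} g^k ⊗ g^{m-k} (exponents mod n) extends via Δ_m(x) = (x ⊗ 1)Δ_m(1) to a coassociative A-bimodule map, hence a nearly Frobenius coproduct on k[G]. -/

import Mathlib

open TensorProduct

section Aux

variable (k : Type*) [Field k] (n : ℕ)

noncomputable def ggX (z : ZMod n) : MonoidAlgebra k (Multiplicative (ZMod n)) :=
  MonoidAlgebra.of k (Multiplicative (ZMod n)) (Multiplicative.ofAdd z)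

lemma ggX_mul (z w : ZMod n) : ggX k n z * ggX k n w = ggX k n (z + w) := by
  simp [ggX, ← map_mul, ← ofAdd_add]

noncomputable def DD [NeZero n] (m : ℕ) :
    MonoidAlgebra k (Multiplicative (ZMod n)) ⊗[k] MonoidAlgebra k (Multiplicative (ZMod n)) :=
  ∑ z : ZMod n, ggX k n z ⊗ₜ[k] ggX k n ((m : ZMod n) - z)

noncomputable def ΔD [NeZero n] (m : ℕ) :
    MonoidAlgebra k (Multiplicative (ZMod n)) →ₗ[k]
      MonoidAlgebra k (Multiplicative (ZMod n)) ⊗[k] MonoidAlgebra k (Multiplicative (ZMod n)) :=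
  (LinearMap.mulRight k (DD k n m)).comp
    ((TensorProduct.mk k (MonoidAlgebra k (Multiplicative (ZMod n)))
      (MonoidAlgebra k (Multiplicative (ZMod n)))).flip 1)

lemma ΔD_apply [NeZero n] (m : ℕ) (x : MonoidAlgebra k (Multiplicative (ZMod n))) :
    ΔD k n m x = (x ⊗ₜ[k] 1) * DD k n m := rfl

lemma ΔD_one [NeZero n] (m : ℕ) : ΔD k n m 1 = DD k n m := by
  rw [ΔD_apply, ← Algebra.TensorProduct.one_def, one_mul]

lemma ΔD_apply_sum [NeZero n] (m : ℕ) (x : MonoidAlgebra k (Multiplicative (ZMod n))) :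
    ΔD k n m x = ∑ z : ZMod n, (x * ggX k n z) ⊗ₜ[k] ggX k n ((m : ZMod n) - z) := by
  rw [ΔD_apply, DD, Finset.mul_sum]
  simp [Algebra.TensorProduct.tmul_mul_tmul]

lemma DD_comm [NeZero n] (m : ℕ) (b : MonoidAlgebra k (Multiplicative (ZMod n))) :
    (b ⊗ₜ[k] 1) * DD k n m = DD k n m * (1 ⊗ₜ[k] b) := by
  induction b using MonoidAlgebra.induction_on with
  | of g =>
      have hg : MonoidAlgebra.of k (Multiplicative (ZMod n)) g
          = ggX k n (Multiplicative.toAdd g) := rfl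
      rw [hg]
      set t := Multiplicative.toAdd g
      rw [DD, Finset.mul_sum, Finset.sum_mul]
      refine Fintype.sum_equiv (Equiv.addLeft t) _ _ ?_
      intro z
      simp only [Equiv.coe_addLeft, Algebra.TensorProduct.tmul_mul_tmul, one_mul,
        mul_one, ggX_mul]
      have e2 : (m : ZMod n) - (t + z) + t = (m : ZMod n) - z := by ring
      rw [e2]
  | add f g hf hg =>
      rw [add_tmul, tmul_add, add_mul, mul_add, hf, hg]
  | smul r f hf =>
      rw [← smul_tmul', tmul_smul, smul_mul_assoc, mul_smul_comm, hf]

end Aux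

set_option maxHeartbeats 1000000 in
set_option synthInstance.maxHeartbeats 400000 in
theorem cyclicGroupAlgebra_deltaM_nearlyFrobenius (k : Type*) [Field k] (n m : ℕ)
    (hn : 0 < n) (hm1 : 1 ≤ m) (hm2 : m ≤ n) :
    ∃ Δ : MonoidAlgebra k (Multiplicative (ZMod n)) →ₗ[k]
        MonoidAlgebra k (Multiplicative (ZMod n)) ⊗[k]
          MonoidAlgebra k (Multiplicative (ZMod n)),
      Δ 1 = ∑ j ∈ Finset.range n,
          (MonoidAlgebra.of k (Multiplicative (ZMod n))
              (Multiplicative.ofAdd ((j + 1 : ℕ) : ZMod n))) ⊗ₜ[k]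
            (MonoidAlgebra.of k (Multiplicative (ZMod n))
              (Multiplicative.ofAdd (((m : ℕ) : ZMod n) - ((j + 1 : ℕ) : ZMod n)))) ∧
      (∀ x, Δ x = (x ⊗ₜ[k] (1 : MonoidAlgebra k (Multiplicative (ZMod n)))) * Δ 1) ∧
      (∀ a x b : MonoidAlgebra k (Multiplicative (ZMod n)),
        Δ (a * x * b) =
          (a ⊗ₜ[k] (1 : MonoidAlgebra k (Multiplicative (ZMod n)))) * Δ x *
            ((1 : MonoidAlgebra k (Multiplicative (ZMod n))) ⊗ₜ[k] b)) ∧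
      (∀ x, (TensorProduct.assoc k (MonoidAlgebra k (Multiplicative (ZMod n)))
            (MonoidAlgebra k (Multiplicative (ZMod n)))
            (MonoidAlgebra k (Multiplicative (ZMod n))))
            (LinearMap.rTensor (MonoidAlgebra k (Multiplicative (ZMod n))) Δ (Δ x)) =
          LinearMap.lTensor (MonoidAlgebra k (Multiplicative (ZMod n))) Δ (Δ x)) := by
  haveI : NeZero n := ⟨hn.ne'⟩
  refine ⟨ΔD k n m, ?_, ?_, ?_, ?_⟩
  · rw [ΔD_one, DD]
    refine Finset.sum_nbij' (fun z => (z - 1).val) (fun j => ((j + 1 : ℕ) : ZMod n))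
      ?_ ?_ ?_ ?_ ?_
    · intro z _
      exact Finset.mem_range.mpr (ZMod.val_lt _)
    · intro j _
      exact Finset.mem_univ _
    · intro z _
      show (((z - 1).val + 1 : ℕ) : ZMod n) = z
      push_cast
      rw [ZMod.natCast_val, ZMod.cast_id]
      ring
    · intro j hj
      show ((((j + 1 : ℕ) : ZMod n)) - 1).val = j
      have h : (((j + 1 : ℕ) : ZMod n) - 1) = ((j : ℕ) : ZMod n) := by push_cast; ring
      rw [h, ZMod.val_natCast_of_lt (Finset.mem_range.mp hj)]
    · intro z _
      show ggX k n z ⊗ₜ[k] ggX k n ((m : ZMod n) - z)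
          = ggX k n (((z - 1).val + 1 : ℕ) : ZMod n) ⊗ₜ[k]
            ggX k n ((m : ZMod n) - (((z - 1).val + 1 : ℕ) : ZMod n))
      rw [show (((z - 1).val + 1 : ℕ) : ZMod n) = z by
        push_cast; rw [ZMod.natCast_val, ZMod.cast_id]; ring]
  · intro x
    rw [ΔD_one, ΔD_apply]
  · intro a x b
    rw [ΔD_apply, ΔD_apply]
    have h1 : (a * x * b) ⊗ₜ[k] (1 : MonoidAlgebra k (Multiplicative (ZMod n)))
        = (a ⊗ₜ[k] 1) * (x ⊗ₜ[k] 1) * (b ⊗ₜ[k] 1) := by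
      simp [Algebra.TensorProduct.tmul_mul_tmul]
    rw [h1, mul_assoc ((a ⊗ₜ[k] 1) * (x ⊗ₜ[k] 1)), DD_comm, ← mul_assoc, mul_assoc (a ⊗ₜ[k] 1)]
  · intro x
    rw [ΔD_apply_sum, map_sum, map_sum]
    simp only [LinearMap.rTensor_tmul, LinearMap.lTensor_tmul, ΔD_apply_sum,
      TensorProduct.sum_tmul, TensorProduct.tmul_sum, map_sum, TensorProduct.assoc_tmul]
    rw [← Fintype.sum_prod_type', ← Fintype.sum_prod_type']
    refine Fintype.sum_equiv
      ⟨fun p => (p.1 + p.2, p.1), fun p => (p.2, p.1 - p.2),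
        fun p => by simp, fun p => by simp⟩ _ _ ?_
    intro p
    simp only [Equiv.coe_fn_mk, mul_assoc, ggX_mul]
    have e3 : (m : ZMod n) - (p.1 + p.2) + p.1 = (m : ZMod n) - p.2 := by ring
    rw [e3]
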